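/- Let X be a proper metric space, H a complex Hilbert space, Z a subset of X, and ρ : C₀(X, ℂ) → B(H) a nondegenerate star-algebra homomorphism (nondegenerate meaning the set of vectors ρ(φ)v, for φ ∈ C₀(X, ℂ) and v ∈ H, has dense linear span in H). Call a bounded operator T on H controlled if there is r > 0 such that ρ(φ)Tρ(ψ) = 0 whenever φ, ψ are compactly supported continuous functions on X whose supports are at distance greater than r from each other; call T locally compact if ρ(φ)T and Tρ(φ) are compact for every compactly supported continuous φ; call T pseudolocal if the commutator ρ(φ)T - Tρ(φ) is compact for every compactly supported continuous φ; and call T supported near Z if there is r' > 0 such that ρ(φ)T = 0 = Tρ(φ) whenever φ is compactly supported continuous with dist(supp φ, Z) > r'. Let D*(X) denote the norm closure in B(H) of the set of controlled pseudolocal operators, and let C*(Z ⊆ X) denote the norm closure of the set of controlled locally compact operators supported near Z. Then C*(Z ⊆ X) is a closed two-sided ideal of D*(X): in particular, for every T ∈ D*(X) and S ∈ C*(Z ⊆ X), both TS and ST lie in C*(Z ⊆ X). -/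

import Mathlib

open ZeroAtInfty

/-- The distance between two subsets of a metric space:
`inf {dist a b : a ∈ A, b ∈ B}`. -/
noncomputable def setDist {X : Type*} [MetricSpace X] (A B : Set X) : ℝ :=
  sInf (Set.image2 dist A B)

section Roe

variable {X : Type*} [MetricSpace X] [ProperSpace X]
variable {H : Type*} [NormedAddCommGroup H] [InnerProductSpace ℂ H] [CompleteSpace H]

/-- A bounded operator `T` is *controlled* (has finite propagation) if there is
`r > 0` such that `ρ(φ) T ρ(ψ) = 0` whenever `φ, ψ` are compactly supported
continuous functions whose supports are at distance greater than `r`. -/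
def IsControlled (ρ : C₀(X, ℂ) →⋆ₙₐ[ℂ] (H →L[ℂ] H)) (T : H →L[ℂ] H) : Prop :=
  ∃ r > (0 : ℝ), ∀ φ ψ : C₀(X, ℂ), HasCompactSupport ⇑φ → HasCompactSupport ⇑ψ →
    r < setDist (tsupport ⇑φ) (tsupport ⇑ψ) → ρ φ * T * ρ ψ = 0

/-- A bounded operator `T` is *locally compact* if `ρ(φ) T` and `T ρ(φ)` are
compact for every compactly supported continuous `φ`. -/
def IsLocallyCompactOp (ρ : C₀(X, ℂ) →⋆ₙₐ[ℂ] (H →L[ℂ] H)) (T : H →L[ℂ] H) : Prop :=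
  ∀ φ : C₀(X, ℂ), HasCompactSupport ⇑φ →
    IsCompactOperator ⇑(ρ φ * T) ∧ IsCompactOperator ⇑(T * ρ φ)

/-- A bounded operator `T` is *pseudolocal* if the commutator `ρ(φ) T - T ρ(φ)`
is compact for every compactly supported continuous `φ`. -/
def IsPseudolocal (ρ : C₀(X, ℂ) →⋆ₙₐ[ℂ] (H →L[ℂ] H)) (T : H →L[ℂ] H) : Prop :=
  ∀ φ : C₀(X, ℂ), HasCompactSupport ⇑φ →
    IsCompactOperator ⇑(ρ φ * T - T * ρ φ)

/-- A bounded operator `T` is *supported near `Z`* if there is `r' > 0` such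
that `ρ(φ) T = 0 = T ρ(φ)` whenever `φ` is compactly supported continuous with
`dist (supp φ, Z) > r'`. -/
def IsSupportedNear (ρ : C₀(X, ℂ) →⋆ₙₐ[ℂ] (H →L[ℂ] H)) (Z : Set X)
    (T : H →L[ℂ] H) : Prop :=
  ∃ r' > (0 : ℝ), ∀ φ : C₀(X, ℂ), HasCompactSupport ⇑φ →
    r' < setDist (tsupport ⇑φ) Z → ρ φ * T = 0 ∧ T * ρ φ = 0

/-- The algebra `D*(X)`: the norm closure of the controlled pseudolocal
operators. -/
def structureAlgebra (ρ : C₀(X, ℂ) →⋆ₙₐ[ℂ] (H →L[ℂ] H)) : Set (H →L[ℂ] H) :=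
  closure {T : H →L[ℂ] H | IsControlled ρ T ∧ IsPseudolocal ρ T}

/-- The ideal `C*(Z ⊆ X)`: the norm closure of the controlled locally compact
operators supported near `Z`. -/
def roeIdeal (ρ : C₀(X, ℂ) →⋆ₙₐ[ℂ] (H →L[ℂ] H)) (Z : Set X) : Set (H →L[ℂ] H) :=
  closure {T : H →L[ℂ] H | IsControlled ρ T ∧ IsLocallyCompactOp ρ T ∧
    IsSupportedNear ρ Z T}

end Roe


open Metric Set

section Helpers

variable {X : Type*} [MetricSpace X] [ProperSpace X]

lemma bddBelow_image2_dist {A B : Set X} : BddBelow (Set.image2 dist A B) := by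
  refine ⟨0, ?_⟩
  rintro x ⟨a, _, b, _, rfl⟩
  exact dist_nonneg

lemma setDist_le_dist {A B : Set X} {a b : X} (ha : a ∈ A) (hb : b ∈ B) :
    setDist A B ≤ dist a b :=
  csInf_le bddBelow_image2_dist (Set.mem_image2_of_mem ha hb)

lemma le_setDist {A B : Set X} (hA : A.Nonempty) (hB : B.Nonempty) {c : ℝ}
    (h : ∀ a ∈ A, ∀ b ∈ B, c ≤ dist a b) : c ≤ setDist A B := by
  refine le_csInf (hA.image2 hB) ?_
  rintro x ⟨a, ha, b, hb, rfl⟩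
  exact h a ha b hb

lemma nonempty_of_setDist_pos {A B : Set X} (h : 0 < setDist A B) :
    A.Nonempty ∧ B.Nonempty := by
  constructor
  · rw [Set.nonempty_iff_ne_empty]
    intro hA
    rw [setDist, hA, Set.image2_empty_left, Real.sInf_empty] at h
    exact lt_irrefl _ h
  · rw [Set.nonempty_iff_ne_empty]
    intro hB
    rw [setDist, hB, Set.image2_empty_right, Real.sInf_empty] at h
    exact lt_irrefl _ h

/-- A complex-valued cutoff function: `1` on the `a`-neighborhood of a nonempty
compact set `K`, supported in the `(a+1)`-neighborhood, with values real in `[0,1]`. -/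
lemma exists_cutoff (K : Set X) (hK : IsCompact K) (hne : K.Nonempty) (a : ℝ) (ha : 0 ≤ a) :
    ∃ χ : C₀(X, ℂ), HasCompactSupport ⇑χ ∧ (∀ x, infDist x K ≤ a → χ x = 1) ∧
      (∀ x ∈ tsupport ⇑χ, infDist x K ≤ a + 1) ∧
      (∀ x, ‖χ x‖ ≤ 1) ∧ (∀ x, ‖1 - χ x‖ ≤ 1) := by
  set g : X → ℝ := fun x => max 0 (min 1 (a + 1 - infDist x K)) with hgdef
  have hgc : Continuous g :=
    continuous_const.max (continuous_const.min (continuous_const.sub (continuous_infDist_pt _)))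
  have hg0 : ∀ x, 0 ≤ g x := fun x => le_max_left _ _
  have hg1 : ∀ x, g x ≤ 1 := fun x => max_le zero_le_one (min_le_left _ _)
  have hgeq1 : ∀ x, infDist x K ≤ a → g x = 1 := by
    intro x hx
    have h1 : (1 : ℝ) ≤ a + 1 - infDist x K := by linarith
    simp only [hgdef]
    rw [min_eq_left h1, max_eq_right zero_le_one]
  have hgsupp : ∀ x, g x ≠ 0 → infDist x K < a + 1 := by
    intro x hx
    by_contra hcon
    push_neg at hcon
    apply hx
    simp only [hgdef]
    have h1 : a + 1 - infDist x K ≤ 0 := by linarith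
    rw [max_eq_left]
    exact (min_le_right _ _).trans h1
  set f : X → ℂ := fun x => (g x : ℂ) with hfdef
  have hfc : Continuous f := Complex.continuous_ofReal.comp hgc
  -- compact support
  obtain ⟨k₀, hk₀⟩ := hne
  obtain ⟨R, hR⟩ := hK.isBounded.subset_closedBall k₀
  have hfsupp : HasCompactSupport f := by
    apply HasCompactSupport.intro (isCompact_closedBall k₀ (a + 2 + R))
    intro x hx
    simp only [hfdef, Complex.ofReal_eq_zero]
    by_contra hgx
    have h1 : infDist x K < a + 1 := hgsupp x hgx
    obtain ⟨k, hk, hdk⟩ := (infDist_lt_iff ⟨k₀, hk₀⟩).mp (lt_of_lt_of_le h1 (by linarith : a + 1 ≤ a + 2))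
    have h2 : dist k k₀ ≤ R := hR hk
    apply hx
    rw [mem_closedBall]
    calc dist x k₀ ≤ dist x k + dist k k₀ := dist_triangle x k k₀
      _ ≤ a + 2 + R := by linarith [hdk.le]
  refine ⟨⟨⟨f, hfc⟩, hfsupp.is_zero_at_infty⟩, hfsupp, ?_, ?_, ?_, ?_⟩
  · intro x hx
    show f x = 1
    simp only [hfdef, hgeq1 x hx, Complex.ofReal_one]
  · intro x hx
    have hsub : Function.support f ⊆ {y | infDist y K ≤ a + 1} := by
      intro y hy
      have h' : f y ≠ 0 := hy
      have : g y ≠ 0 := fun h0 => h' (by simp [hfdef, h0])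
      exact (hgsupp y this).le
    have hcl : IsClosed {y : X | infDist y K ≤ a + 1} :=
      isClosed_le (continuous_infDist_pt _) continuous_const
    exact closure_minimal hsub hcl hx
  · intro x
    show ‖f x‖ ≤ 1
    simp only [hfdef, Complex.norm_real, Real.norm_eq_abs, abs_le]
    constructor <;> [linarith [hg0 x]; exact hg1 x]
  · intro x
    show ‖1 - f x‖ ≤ 1
    have : (1 : ℂ) - f x = ((1 - g x : ℝ) : ℂ) := by
      simp [hfdef]
    rw [this]
    simp only [Complex.norm_real, Real.norm_eq_abs, abs_le]
    constructor <;> [linarith [hg1 x]; linarith [hg0 x]]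

/-- Split a compactly supported function into a part supported near `Z` and a
part supported away from `Z`. -/
lemma exists_split (χ : C₀(X, ℂ)) (hχ : HasCompactSupport ⇑χ) (Z : Set X) (c : ℝ) :
    ∃ χ₁ χ₂ : C₀(X, ℂ), χ = χ₁ + χ₂ ∧ HasCompactSupport ⇑χ₁ ∧ HasCompactSupport ⇑χ₂ ∧
      (∀ x ∈ tsupport ⇑χ₁, infDist x Z ≤ c + 1) ∧ (∀ x ∈ tsupport ⇑χ₂, c ≤ infDist x Z) := by
  set u : X → ℝ := fun x => max 0 (min 1 (c + 1 - infDist x Z)) with hudef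
  have huc : Continuous u :=
    continuous_const.max (continuous_const.min (continuous_const.sub (continuous_infDist_pt _)))
  have hueq1 : ∀ x, infDist x Z ≤ c → u x = 1 := by
    intro x hx
    have h1 : (1 : ℝ) ≤ c + 1 - infDist x Z := by linarith
    simp only [hudef]
    rw [min_eq_left h1, max_eq_right zero_le_one]
  have husupp : ∀ x, u x ≠ 0 → infDist x Z < c + 1 := by
    intro x hx
    by_contra hcon
    push_neg at hcon
    apply hx
    simp only [hudef]
    have h1 : c + 1 - infDist x Z ≤ 0 := by linarith
    rw [max_eq_left]
    exact (min_le_right _ _).trans h1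
  set f₁ : X → ℂ := fun x => χ x * (u x : ℂ) with hf₁def
  have hf₁c : Continuous f₁ :=
    (map_continuous χ).mul (Complex.continuous_ofReal.comp huc)
  have hf₁supp : HasCompactSupport f₁ := by
    apply hχ.mono'
    intro x hx
    have : χ x ≠ 0 := by
      intro h0
      apply hx
      simp [hf₁def, h0]
    exact subset_tsupport _ this
  set χ₁ : C₀(X, ℂ) := ⟨⟨f₁, hf₁c⟩, hf₁supp.is_zero_at_infty⟩ with hχ₁def
  refine ⟨χ₁, χ - χ₁, by abel, hf₁supp, ?_, ?_, ?_⟩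
  · have : (⇑(χ - χ₁) : X → ℂ) = ⇑χ - ⇑χ₁ := ZeroAtInftyContinuousMap.coe_sub _ _
    rw [this]
    have hsub : Function.support (⇑χ - ⇑χ₁) ⊆ tsupport ⇑χ ∪ tsupport ⇑χ₁ := by
      intro y hy
      have hy' : χ y - χ₁ y ≠ 0 := hy
      by_cases h : χ y = 0
      · refine Or.inr (subset_tsupport _ ?_)
        intro h1
        exact hy' (by rw [h, h1, sub_zero])
      · exact Or.inl (subset_tsupport _ h)
    have h1 : tsupport (⇑χ - ⇑χ₁) ⊆ tsupport ⇑χ ∪ tsupport ⇑χ₁ :=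
      closure_minimal hsub ((isClosed_tsupport _).union (isClosed_tsupport _))
    exact IsCompact.of_isClosed_subset (hχ.union hf₁supp) (isClosed_tsupport _) h1
  · intro x hx
    have hsub : Function.support f₁ ⊆ {y | infDist y Z ≤ c + 1} := by
      intro y hy
      have : u y ≠ 0 := by
        intro h0
        apply hy
        simp [hf₁def, h0]
      exact (husupp y this).le
    have hcl : IsClosed {y : X | infDist y Z ≤ c + 1} :=
      isClosed_le (continuous_infDist_pt _) continuous_const
    exact closure_minimal hsub hcl hx
  · intro x hx
    have hsub : Function.support ⇑(χ - χ₁) ⊆ {y | c ≤ infDist y Z} := by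
      intro y hy
      have hy' : χ y - χ y * (u y : ℂ) ≠ 0 := by
        simpa [ZeroAtInftyContinuousMap.sub_apply, hχ₁def, hf₁def] using hy
      by_contra hcon
      rw [Set.mem_setOf_eq, not_le] at hcon
      apply hy'
      rw [hueq1 y hcon.le]
      simp
    have hcl : IsClosed {y : X | c ≤ infDist y Z} :=
      isClosed_le continuous_const (continuous_infDist_pt _)
    exact closure_minimal hsub hcl hx

end Helpers
section Nondegen

variable {X : Type*} [MetricSpace X] [ProperSpace X]
variable {H : Type*} [NormedAddCommGroup H] [InnerProductSpace ℂ H] [CompleteSpace H]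

/-- Compactly supported functions are dense in `C₀`. -/
lemma approx_compactSupport (φ : C₀(X, ℂ)) {ε : ℝ} (hε : 0 < ε) :
    ∃ ψ : C₀(X, ℂ), HasCompactSupport ⇑ψ ∧ ‖φ - ψ‖ ≤ ε := by
  set K : Set X := {x | ε ≤ ‖φ x‖} with hKdef
  have hKcl : IsClosed K := isClosed_le continuous_const ((map_continuous φ).norm)
  have hKc : IsCompact K := by
    have h0 : Filter.Tendsto ⇑φ (Filter.cocompact X) (nhds 0) := zero_at_infty φ
    have h1 : ⇑φ ⁻¹' Metric.ball 0 ε ∈ Filter.cocompact X :=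
      h0 (Metric.ball_mem_nhds 0 hε)
    rw [Filter.mem_cocompact] at h1
    obtain ⟨t, htc, hts⟩ := h1
    refine htc.of_isClosed_subset hKcl ?_
    intro x hx
    by_contra hxt
    have : x ∈ ⇑φ ⁻¹' Metric.ball 0 ε := hts hxt
    simp only [Set.mem_preimage, Metric.mem_ball, dist_zero_right] at this
    exact absurd this (not_lt.mpr hx)
  by_cases hne : K.Nonempty
  · obtain ⟨χ, hχc, hχ1, -, hχle, hχle'⟩ := exists_cutoff K hKc hne 0 le_rfl
    refine ⟨φ * χ, ?_, ?_⟩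
    · have hcoe : ⇑(φ * χ) = ⇑φ * ⇑χ := ZeroAtInftyContinuousMap.coe_mul φ χ
      rw [hcoe]
      exact hχc.mul_left
    · rw [← ZeroAtInftyContinuousMap.norm_toBCF_eq_norm]
      refine (BoundedContinuousFunction.norm_le hε.le).mpr ?_
      intro x
      have hx : ((φ - φ * χ).toBCF) x = φ x - φ x * χ x := rfl
      rw [hx]
      by_cases hxK : x ∈ K
      · rw [hχ1 x (by rw [Metric.infDist_zero_of_mem hxK])]
        simpa using hε.le
      · have h2 : ‖φ x‖ < ε := by
          simp only [hKdef, Set.mem_setOf_eq, not_le] at hxK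
          exact hxK
        have : φ x - φ x * χ x = φ x * (1 - χ x) := by ring
        rw [this, norm_mul]
        calc ‖φ x‖ * ‖1 - χ x‖ ≤ ‖φ x‖ * 1 := by
              exact mul_le_mul_of_nonneg_left (hχle' x) (norm_nonneg _)
          _ ≤ ε := by rw [mul_one]; exact h2.le
  · have hcs0 : HasCompactSupport ⇑(0 : C₀(X, ℂ)) := by
      rw [ZeroAtInftyContinuousMap.coe_zero]
      exact HasCompactSupport.intro isCompact_empty (fun x _ => rfl)
    refine ⟨0, hcs0, ?_⟩
    rw [sub_zero, ← ZeroAtInftyContinuousMap.norm_toBCF_eq_norm]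
    refine (BoundedContinuousFunction.norm_le hε.le).mpr ?_
    intro x
    have : x ∉ K := fun hx => hne ⟨x, hx⟩
    simp only [hKdef, Set.mem_setOf_eq, not_le] at this
    exact this.le

variable (ρ : C₀(X, ℂ) →⋆ₙₐ[ℂ] (H →L[ℂ] H))

/-- If `A ρ(φ) = 0` for all compactly supported `φ` and `ρ` is nondegenerate,
then `A = 0`. -/
lemma eq_zero_of_mul_rho_eq_zero
    (hρ : Dense (↑(Submodule.span ℂ
      {v : H | ∃ (φ : C₀(X, ℂ)) (w : H), ρ φ w = v}) : Set H))
    (A : H →L[ℂ] H)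
    (h : ∀ φ : C₀(X, ℂ), HasCompactSupport ⇑φ → A * ρ φ = 0) : A = 0 := by
  have key : ∀ (φ : C₀(X, ℂ)) (w : H), A (ρ φ w) = 0 := by
    intro φ w
    have hb : ∀ ε > (0 : ℝ), ‖A (ρ φ w)‖ ≤ ε * (‖A‖ * ‖w‖) := by
      intro ε hε
      obtain ⟨ψ, hψc, hψ⟩ := approx_compactSupport φ hε
      have h0 : A (ρ ψ w) = 0 := by
        have h1 := h ψ hψc
        have : A (ρ ψ w) = (A * ρ ψ) w := rfl
        rw [this, h1]
        rfl
      have hsplit : A (ρ φ w) = A (ρ (φ - ψ) w) + A (ρ ψ w) := by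
        rw [map_sub ρ]
        simp only [ContinuousLinearMap.sub_apply, map_sub]
        abel
      rw [hsplit, h0, add_zero]
      calc ‖A ((ρ (φ - ψ)) w)‖ ≤ ‖A‖ * ‖(ρ (φ - ψ)) w‖ := A.le_opNorm _
        _ ≤ ‖A‖ * (‖ρ (φ - ψ)‖ * ‖w‖) :=
            mul_le_mul_of_nonneg_left ((ρ (φ - ψ)).le_opNorm w) (norm_nonneg A)
        _ ≤ ‖A‖ * (‖φ - ψ‖ * ‖w‖) := by
            refine mul_le_mul_of_nonneg_left ?_ (norm_nonneg A)
            exact mul_le_mul_of_nonneg_right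
              (NonUnitalStarAlgHom.norm_apply_le ρ (φ - ψ)) (norm_nonneg w)
        _ ≤ ‖A‖ * (ε * ‖w‖) := by
            refine mul_le_mul_of_nonneg_left ?_ (norm_nonneg A)
            exact mul_le_mul_of_nonneg_right hψ (norm_nonneg w)
        _ = ε * (‖A‖ * ‖w‖) := by ring
    have hle : ‖A (ρ φ w)‖ ≤ 0 := by
      by_contra hlt
      push_neg at hlt
      set n := ‖A (ρ φ w)‖ with hn
      set C := ‖A‖ * ‖w‖ with hC
      have hC0 : 0 ≤ C := mul_nonneg (norm_nonneg _) (norm_nonneg _)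
      have hδ : 0 < n / (2 * (C + 1)) := by positivity
      have h2 := hb (n / (2 * (C + 1))) hδ
      have hne : (2 : ℝ) * (C + 1) ≠ 0 := by positivity
      have heq : n / (2 * (C + 1)) * (2 * (C + 1)) = n := div_mul_cancel₀ n hne
      nlinarith [mul_nonneg hδ.le hC0]
    have := le_antisymm hle (norm_nonneg _)
    exact norm_eq_zero.mp this
  have hsub : {v : H | ∃ (φ : C₀(X, ℂ)) (w : H), ρ φ w = v} ⊆ ((LinearMap.ker (A : H →ₗ[ℂ] H) : Submodule ℂ H) : Set H) := by
    rintro v ⟨φ, w, rfl⟩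
    exact key φ w
  have hspan : (Submodule.span ℂ {v : H | ∃ (φ : C₀(X, ℂ)) (w : H), ρ φ w = v} : Set H)
      ⊆ ((LinearMap.ker (A : H →ₗ[ℂ] H) : Submodule ℂ H) : Set H) := Submodule.span_le.mpr hsub
  ext v
  have hv : v ∈ closure (↑(Submodule.span ℂ
      {v : H | ∃ (φ : C₀(X, ℂ)) (w : H), ρ φ w = v}) : Set H) := by
    rw [hρ.closure_eq]; trivial
  have hker : v ∈ ((LinearMap.ker (A : H →ₗ[ℂ] H) : Submodule ℂ H) : Set H) := by
    have hclosed : IsClosed ((LinearMap.ker (A : H →ₗ[ℂ] H) : Submodule ℂ H) : Set H) := ContinuousLinearMap.isClosed_ker A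
    exact hclosed.closure_subset ((closure_mono hspan) hv)
  simpa using hker

/-- Left-sided version. -/
lemma eq_zero_of_rho_mul_eq_zero
    (hρ : Dense (↑(Submodule.span ℂ
      {v : H | ∃ (φ : C₀(X, ℂ)) (w : H), ρ φ w = v}) : Set H))
    (A : H →L[ℂ] H)
    (h : ∀ φ : C₀(X, ℂ), HasCompactSupport ⇑φ → ρ φ * A = 0) : A = 0 := by
  have hstar : star A = 0 := by
    apply eq_zero_of_mul_rho_eq_zero ρ hρ
    intro φ hφ
    have hsφ : HasCompactSupport ⇑(star φ) := by
      have hsupp : Function.support ⇑(star φ) = Function.support ⇑φ := by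
        ext x
        simp [ZeroAtInftyContinuousMap.star_apply, star_eq_zero]
      unfold HasCompactSupport tsupport
      rw [hsupp]
      exact hφ
    have h1 : ρ (star φ) * A = 0 := h (star φ) hsφ
    calc star A * ρ φ = star A * star (ρ (star φ)) := by rw [map_star, star_star]
      _ = star (ρ (star φ) * A) := by rw [star_mul]
      _ = 0 := by rw [h1, star_zero]
  have := star_eq_zero.mp hstar
  exact this

end Nondegen
section Localize

variable {X : Type*} [MetricSpace X] [ProperSpace X]
variable {H : Type*} [NormedAddCommGroup H] [InnerProductSpace ℂ H] [CompleteSpace H]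

lemma c0_eq_zero_of_tsupport_empty (ψ : C₀(X, ℂ)) (h : tsupport ⇑ψ = ∅) : ψ = 0 := by
  have hco : ⇑ψ = 0 := tsupport_eq_empty_iff.mp h
  ext x
  rw [congrFun hco x]
  rfl

variable (ρ : C₀(X, ℂ) →⋆ₙₐ[ℂ] (H →L[ℂ] H))

lemma localize_right
    (hρ : Dense (↑(Submodule.span ℂ
      {v : H | ∃ (φ : C₀(X, ℂ)) (w : H), ρ φ w = v}) : Set H))
    {S : H →L[ℂ] H} {rS : ℝ}
    (hSc : ∀ φ ψ : C₀(X, ℂ), HasCompactSupport ⇑φ → HasCompactSupport ⇑ψ →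
      rS < setDist (tsupport ⇑φ) (tsupport ⇑ψ) → ρ φ * S * ρ ψ = 0)
    (ψ χ : C₀(X, ℂ)) (hψ : HasCompactSupport ⇑ψ)
    (hχ1 : ∀ x, Metric.infDist x (tsupport ⇑ψ) ≤ rS + 1 → χ x = 1) :
    S * ρ ψ = ρ χ * (S * ρ ψ) := by
  by_cases hψ0 : tsupport ⇑ψ = ∅
  · rw [c0_eq_zero_of_tsupport_empty ψ hψ0, map_zero, mul_zero, mul_zero]
  have hψne : (tsupport ⇑ψ).Nonempty := Set.nonempty_iff_ne_empty.mpr hψ0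
  have hA : S * ρ ψ - ρ χ * (S * ρ ψ) = 0 := by
    apply eq_zero_of_rho_mul_eq_zero ρ hρ
    intro φ' hφ'
    set g : C₀(X, ℂ) := φ' - φ' * χ with hgdef
    have hgcoe : ∀ x, g x = φ' x - φ' x * χ x := fun x => by
      simp [hgdef]
    have hgsupp : Function.support ⇑g ⊆ {x | rS + 1 ≤ Metric.infDist x (tsupport ⇑ψ)} := by
      intro x hx
      rw [Set.mem_setOf_eq]
      by_contra hcon
      rw [not_le] at hcon
      apply hx
      show g x = 0
      rw [hgcoe x, hχ1 x hcon.le, mul_one, sub_self]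
    have hgts : tsupport ⇑g ⊆ {x | rS + 1 ≤ Metric.infDist x (tsupport ⇑ψ)} :=
      closure_minimal hgsupp (isClosed_le continuous_const (Metric.continuous_infDist_pt _))
    have hgc : HasCompactSupport ⇑g := by
      apply hφ'.mono'
      intro x hx
      have : φ' x ≠ 0 := by
        intro h0
        exact hx (by rw [hgcoe x, h0, zero_mul, sub_zero])
      exact subset_tsupport _ this
    have hρg : ρ g = ρ φ' - ρ φ' * ρ χ := by rw [hgdef, map_sub, map_mul]
    have hkill : ρ g * S * ρ ψ = 0 := by
      by_cases hg0 : tsupport ⇑g = ∅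
      · rw [c0_eq_zero_of_tsupport_empty g hg0, map_zero, zero_mul, zero_mul]
      · apply hSc g ψ hgc hψ
        have hgne : (tsupport ⇑g).Nonempty := Set.nonempty_iff_ne_empty.mpr hg0
        have hle : rS + 1 ≤ setDist (tsupport ⇑g) (tsupport ⇑ψ) := by
          apply le_setDist hgne hψne
          intro a ha b hb
          calc rS + 1 ≤ Metric.infDist a (tsupport ⇑ψ) := hgts ha
            _ ≤ dist a b := Metric.infDist_le_dist_of_mem hb
        linarith
    calc ρ φ' * (S * ρ ψ - ρ χ * (S * ρ ψ))
        = (ρ φ' - ρ φ' * ρ χ) * S * ρ ψ := by noncomm_ring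
      _ = ρ g * S * ρ ψ := by rw [hρg]
      _ = 0 := hkill
  exact (sub_eq_zero.mp hA)

lemma localize_left
    (hρ : Dense (↑(Submodule.span ℂ
      {v : H | ∃ (φ : C₀(X, ℂ)) (w : H), ρ φ w = v}) : Set H))
    {S : H →L[ℂ] H} {rS : ℝ}
    (hSc : ∀ φ ψ : C₀(X, ℂ), HasCompactSupport ⇑φ → HasCompactSupport ⇑ψ →
      rS < setDist (tsupport ⇑φ) (tsupport ⇑ψ) → ρ φ * S * ρ ψ = 0)
    (ψ χ : C₀(X, ℂ)) (hψ : HasCompactSupport ⇑ψ)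
    (hχ1 : ∀ x, Metric.infDist x (tsupport ⇑ψ) ≤ rS + 1 → χ x = 1) :
    ρ ψ * S = ρ ψ * S * ρ χ := by
  by_cases hψ0 : tsupport ⇑ψ = ∅
  · rw [c0_eq_zero_of_tsupport_empty ψ hψ0, map_zero, zero_mul, zero_mul]
  have hψne : (tsupport ⇑ψ).Nonempty := Set.nonempty_iff_ne_empty.mpr hψ0
  have hA : ρ ψ * S - ρ ψ * S * ρ χ = 0 := by
    apply eq_zero_of_mul_rho_eq_zero ρ hρ
    intro φ' hφ'
    set g : C₀(X, ℂ) := φ' - χ * φ' with hgdef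
    have hgcoe : ∀ x, g x = φ' x - χ x * φ' x := fun x => by
      simp [hgdef]
    have hgsupp : Function.support ⇑g ⊆ {x | rS + 1 ≤ Metric.infDist x (tsupport ⇑ψ)} := by
      intro x hx
      rw [Set.mem_setOf_eq]
      by_contra hcon
      rw [not_le] at hcon
      apply hx
      show g x = 0
      rw [hgcoe x, hχ1 x hcon.le, one_mul, sub_self]
    have hgts : tsupport ⇑g ⊆ {x | rS + 1 ≤ Metric.infDist x (tsupport ⇑ψ)} :=
      closure_minimal hgsupp (isClosed_le continuous_const (Metric.continuous_infDist_pt _))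
    have hgc : HasCompactSupport ⇑g := by
      apply hφ'.mono'
      intro x hx
      have : φ' x ≠ 0 := by
        intro h0
        exact hx (by rw [hgcoe x, h0, mul_zero, sub_zero])
      exact subset_tsupport _ this
    have hρg : ρ g = ρ φ' - ρ χ * ρ φ' := by rw [hgdef, map_sub, map_mul]
    have hkill : ρ ψ * S * ρ g = 0 := by
      by_cases hg0 : tsupport ⇑g = ∅
      · rw [c0_eq_zero_of_tsupport_empty g hg0, map_zero, mul_zero]
      · apply hSc ψ g hψ hgc
        have hgne : (tsupport ⇑g).Nonempty := Set.nonempty_iff_ne_empty.mpr hg0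
        have hle : rS + 1 ≤ setDist (tsupport ⇑ψ) (tsupport ⇑g) := by
          apply le_setDist hψne hgne
          intro a ha b hb
          rw [dist_comm]
          calc rS + 1 ≤ Metric.infDist b (tsupport ⇑ψ) := hgts hb
            _ ≤ dist b a := Metric.infDist_le_dist_of_mem ha
        linarith
    calc (ρ ψ * S - ρ ψ * S * ρ χ) * ρ φ'
        = ρ ψ * S * (ρ φ' - ρ χ * ρ φ') := by noncomm_ring
      _ = ρ ψ * S * ρ g := by rw [← hρg]
      _ = 0 := hkill
  exact (sub_eq_zero.mp hA)

end Localize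

section Core

variable {X : Type*} [MetricSpace X] [ProperSpace X]
variable {H : Type*} [NormedAddCommGroup H] [InnerProductSpace ℂ H] [CompleteSpace H]
variable (ρ : C₀(X, ℂ) →⋆ₙₐ[ℂ] (H →L[ℂ] H)) (Z : Set X)

lemma core_TS
    (hρ : Dense (↑(Submodule.span ℂ
      {v : H | ∃ (φ : C₀(X, ℂ)) (w : H), ρ φ w = v}) : Set H))
    {T S : H →L[ℂ] H}
    (hTcon : IsControlled ρ T) (hTp : IsPseudolocal ρ T)
    (hScon : IsControlled ρ S) (hSl : IsLocallyCompactOp ρ S)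
    (hSnear : IsSupportedNear ρ Z S) :
    IsControlled ρ (T * S) ∧ IsLocallyCompactOp ρ (T * S) ∧
      IsSupportedNear ρ Z (T * S) := by
  obtain ⟨rT, hrT, hTc⟩ := hTcon
  obtain ⟨rS, hrS, hSc⟩ := hScon
  obtain ⟨r', hr', hSn⟩ := hSnear
  refine ⟨⟨rT + rS + 3, by linarith, ?_⟩, ?_, ⟨rT + r' + 4, by linarith, ?_⟩⟩
  · -- controlled
    intro φ ψ hφ hψ hd
    have hpos : (0:ℝ) < rT + rS + 3 := by linarith
    obtain ⟨hφne, hψne⟩ := nonempty_of_setDist_pos (hpos.trans hd)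
    obtain ⟨χ, hχc, hχ1, hχs, -, -⟩ :=
      exists_cutoff (tsupport ⇑ψ) hψ hψne (rS + 1) (by linarith)
    have hloc : S * ρ ψ = ρ χ * (S * ρ ψ) := localize_right ρ hρ hSc ψ χ hψ hχ1
    have hχne : (tsupport ⇑χ).Nonempty := by
      obtain ⟨b, hb⟩ := hψne
      refine ⟨b, subset_tsupport _ ?_⟩
      have h1 : χ b = 1 := hχ1 b (by rw [Metric.infDist_zero_of_mem hb]; linarith)
      show χ b ≠ 0
      rw [h1]; exact one_ne_zero
    have hTχ : ρ φ * T * ρ χ = 0 := by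
      apply hTc φ χ hφ hχc
      have h1 : rT + 1 ≤ setDist (tsupport ⇑φ) (tsupport ⇑χ) := by
        apply le_setDist hφne hχne
        intro a ha c hc
        obtain ⟨b, hb, hcb⟩ := IsCompact.exists_infDist_eq_dist hψ hψne c
        have h2 : rT + rS + 3 < dist a b := lt_of_lt_of_le hd (setDist_le_dist ha hb)
        have h3 : dist c b ≤ rS + 2 := by
          rw [← hcb]
          have := hχs c hc; linarith
        have h4 : dist a b ≤ dist a c + dist c b := dist_triangle a c b
        linarith
      linarith
    calc ρ φ * (T * S) * ρ ψ = ρ φ * T * (S * ρ ψ) := by noncomm_ring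
      _ = ρ φ * T * (ρ χ * (S * ρ ψ)) := by rw [← hloc]
      _ = (ρ φ * T * ρ χ) * (S * ρ ψ) := by noncomm_ring
      _ = 0 := by rw [hTχ, zero_mul]
  · -- locally compact
    intro φ hφ
    obtain ⟨h1, h2⟩ := hSl φ hφ
    constructor
    · have key : ρ φ * (T * S) = (ρ φ * T - T * ρ φ) * S + T * (ρ φ * S) := by
        noncomm_ring
      rw [key]
      have c1 : IsCompactOperator ⇑((ρ φ * T - T * ρ φ) * S) := (hTp φ hφ).comp_clm S
      have c2 : IsCompactOperator ⇑(T * (ρ φ * S)) := h1.clm_comp T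
      exact c1.add c2
    · have key : (T * S) * ρ φ = T * (S * ρ φ) := by rw [mul_assoc]
      rw [key]
      exact h2.clm_comp T
  · -- supported near Z
    intro φ hφ hd
    have hpos : (0:ℝ) < rT + r' + 4 := by linarith
    obtain ⟨hφne, hZne⟩ := nonempty_of_setDist_pos (hpos.trans hd)
    have hSφ := hSn φ hφ (by linarith : r' < setDist (tsupport ⇑φ) Z)
    constructor
    · apply eq_zero_of_mul_rho_eq_zero ρ hρ
      intro ψ hψ
      by_cases hψ0 : tsupport ⇑ψ = ∅
      · rw [c0_eq_zero_of_tsupport_empty ψ hψ0, map_zero, mul_zero]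
      have hψne := Set.nonempty_iff_ne_empty.mpr hψ0
      obtain ⟨χ, hχc, hχ1, hχs, -, -⟩ :=
        exists_cutoff (tsupport ⇑ψ) hψ hψne (rS + 1) (by linarith)
      have hloc : S * ρ ψ = ρ χ * (S * ρ ψ) := localize_right ρ hρ hSc ψ χ hψ hχ1
      obtain ⟨χ₁, χ₂, hsum, hc1, hc2, hs1, hs2⟩ := exists_split χ hχc Z (r' + 1)
      have hρχ : ρ χ = ρ χ₁ + ρ χ₂ := by rw [hsum, map_add]
      have hχ₂S : ρ χ₂ * S = 0 := by
        by_cases h0 : tsupport ⇑χ₂ = ∅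
        · rw [c0_eq_zero_of_tsupport_empty χ₂ h0, map_zero, zero_mul]
        · refine (hSn χ₂ hc2 ?_).1
          have hle : r' + 1 ≤ setDist (tsupport ⇑χ₂) Z := by
            apply le_setDist (Set.nonempty_iff_ne_empty.mpr h0) hZne
            intro a ha b hb
            calc r' + 1 ≤ Metric.infDist a Z := hs2 a ha
              _ ≤ dist a b := Metric.infDist_le_dist_of_mem hb
          linarith
      have hTχ₁ : ρ φ * T * ρ χ₁ = 0 := by
        by_cases h0 : tsupport ⇑χ₁ = ∅
        · rw [c0_eq_zero_of_tsupport_empty χ₁ h0, map_zero, mul_zero]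
        · apply hTc φ χ₁ hφ hc1
          have hle : rT + 1 ≤ setDist (tsupport ⇑φ) (tsupport ⇑χ₁) := by
            apply le_setDist hφne (Set.nonempty_iff_ne_empty.mpr h0)
            intro a ha c hc
            have hcz : Metric.infDist c Z ≤ r' + 2 := by
              have := hs1 c hc; linarith
            obtain ⟨b, hb, hcb⟩ := (Metric.infDist_lt_iff hZne).mp
              (lt_of_le_of_lt hcz (lt_add_one _))
            have h2 : rT + r' + 4 < dist a b := lt_of_lt_of_le hd (setDist_le_dist ha hb)
            have h4 : dist a b ≤ dist a c + dist c b := dist_triangle a c b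
            linarith
          linarith
      calc ρ φ * (T * S) * ρ ψ = ρ φ * T * (S * ρ ψ) := by noncomm_ring
        _ = ρ φ * T * (ρ χ * (S * ρ ψ)) := by rw [← hloc]
        _ = ρ φ * T * ((ρ χ₁ + ρ χ₂) * (S * ρ ψ)) := by rw [hρχ]
        _ = (ρ φ * T * ρ χ₁) * (S * ρ ψ) + (ρ φ * T) * ((ρ χ₂ * S) * ρ ψ) := by
            noncomm_ring
        _ = 0 := by rw [hTχ₁, hχ₂S]; simp
    · rw [mul_assoc, hSφ.2, mul_zero]

lemma core_ST
    (hρ : Dense (↑(Submodule.span ℂ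
      {v : H | ∃ (φ : C₀(X, ℂ)) (w : H), ρ φ w = v}) : Set H))
    {T S : H →L[ℂ] H}
    (hTcon : IsControlled ρ T) (hTp : IsPseudolocal ρ T)
    (hScon : IsControlled ρ S) (hSl : IsLocallyCompactOp ρ S)
    (hSnear : IsSupportedNear ρ Z S) :
    IsControlled ρ (S * T) ∧ IsLocallyCompactOp ρ (S * T) ∧
      IsSupportedNear ρ Z (S * T) := by
  obtain ⟨rT, hrT, hTc⟩ := hTcon
  obtain ⟨rS, hrS, hSc⟩ := hScon
  obtain ⟨r', hr', hSn⟩ := hSnear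
  refine ⟨⟨rT + rS + 3, by linarith, ?_⟩, ?_, ⟨rT + r' + 4, by linarith, ?_⟩⟩
  · -- controlled
    intro φ ψ hφ hψ hd
    have hpos : (0:ℝ) < rT + rS + 3 := by linarith
    obtain ⟨hφne, hψne⟩ := nonempty_of_setDist_pos (hpos.trans hd)
    obtain ⟨χ, hχc, hχ1, hχs, -, -⟩ :=
      exists_cutoff (tsupport ⇑φ) hφ hφne (rS + 1) (by linarith)
    have hloc : ρ φ * S = ρ φ * S * ρ χ := localize_left ρ hρ hSc φ χ hφ hχ1
    have hχne : (tsupport ⇑χ).Nonempty := by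
      obtain ⟨b, hb⟩ := hφne
      refine ⟨b, subset_tsupport _ ?_⟩
      have h1 : χ b = 1 := hχ1 b (by rw [Metric.infDist_zero_of_mem hb]; linarith)
      show χ b ≠ 0
      rw [h1]; exact one_ne_zero
    have hχT : ρ χ * T * ρ ψ = 0 := by
      apply hTc χ ψ hχc hψ
      have h1 : rT + 1 ≤ setDist (tsupport ⇑χ) (tsupport ⇑ψ) := by
        apply le_setDist hχne hψne
        intro a ha c hc
        obtain ⟨b, hb, hab⟩ := IsCompact.exists_infDist_eq_dist hφ hφne a
        have h3 : dist a b ≤ rS + 2 := by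
          rw [← hab]
          have := hχs a ha; linarith
        have h2 : rT + rS + 3 < dist b c := lt_of_lt_of_le hd (setDist_le_dist hb hc)
        have h4 : dist b c ≤ dist b a + dist a c := dist_triangle b a c
        rw [dist_comm b a] at h4
        linarith
      linarith
    calc ρ φ * (S * T) * ρ ψ = (ρ φ * S) * (T * ρ ψ) := by noncomm_ring
      _ = (ρ φ * S * ρ χ) * (T * ρ ψ) := by rw [← hloc]
      _ = (ρ φ * S) * (ρ χ * T * ρ ψ) := by noncomm_ring
      _ = 0 := by rw [hχT, mul_zero]
  · -- locally compact
    intro φ hφ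
    obtain ⟨h1, h2⟩ := hSl φ hφ
    constructor
    · have key : ρ φ * (S * T) = (ρ φ * S) * T := by noncomm_ring
      rw [key]
      exact h1.comp_clm T
    · have key : (S * T) * ρ φ = S * (T * ρ φ - ρ φ * T) + (S * ρ φ) * T := by
        noncomm_ring
      rw [key]
      have cneg : IsCompactOperator ⇑(T * ρ φ - ρ φ * T) := by
        have heq : T * ρ φ - ρ φ * T = -(ρ φ * T - T * ρ φ) := by noncomm_ring
        rw [heq]
        exact (hTp φ hφ).neg
      have c1 : IsCompactOperator ⇑(S * (T * ρ φ - ρ φ * T)) := cneg.clm_comp S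
      have c2 : IsCompactOperator ⇑((S * ρ φ) * T) := h2.comp_clm T
      exact c1.add c2
  · -- supported near Z
    intro φ hφ hd
    have hpos : (0:ℝ) < rT + r' + 4 := by linarith
    obtain ⟨hφne, hZne⟩ := nonempty_of_setDist_pos (hpos.trans hd)
    have hSφ := hSn φ hφ (by linarith : r' < setDist (tsupport ⇑φ) Z)
    constructor
    · rw [← mul_assoc, hSφ.1, zero_mul]
    · apply eq_zero_of_rho_mul_eq_zero ρ hρ
      intro ψ hψ
      by_cases hψ0 : tsupport ⇑ψ = ∅
      · rw [c0_eq_zero_of_tsupport_empty ψ hψ0, map_zero, zero_mul]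
      have hψne := Set.nonempty_iff_ne_empty.mpr hψ0
      obtain ⟨χ, hχc, hχ1, hχs, -, -⟩ :=
        exists_cutoff (tsupport ⇑ψ) hψ hψne (rS + 1) (by linarith)
      have hloc : ρ ψ * S = ρ ψ * S * ρ χ := localize_left ρ hρ hSc ψ χ hψ hχ1
      obtain ⟨χ₁, χ₂, hsum, hc1, hc2, hs1, hs2⟩ := exists_split χ hχc Z (r' + 1)
      have hρχ : ρ χ = ρ χ₁ + ρ χ₂ := by rw [hsum, map_add]
      have hSχ₂ : S * ρ χ₂ = 0 := by
        by_cases h0 : tsupport ⇑χ₂ = ∅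
        · rw [c0_eq_zero_of_tsupport_empty χ₂ h0, map_zero, mul_zero]
        · refine (hSn χ₂ hc2 ?_).2
          have hle : r' + 1 ≤ setDist (tsupport ⇑χ₂) Z := by
            apply le_setDist (Set.nonempty_iff_ne_empty.mpr h0) hZne
            intro a ha b hb
            calc r' + 1 ≤ Metric.infDist a Z := hs2 a ha
              _ ≤ dist a b := Metric.infDist_le_dist_of_mem hb
          linarith
      have hχ₁T : ρ χ₁ * T * ρ φ = 0 := by
        by_cases h0 : tsupport ⇑χ₁ = ∅
        · rw [c0_eq_zero_of_tsupport_empty χ₁ h0, map_zero, zero_mul, zero_mul]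
        · apply hTc χ₁ φ hc1 hφ
          have hle : rT + 1 ≤ setDist (tsupport ⇑χ₁) (tsupport ⇑φ) := by
            apply le_setDist (Set.nonempty_iff_ne_empty.mpr h0) hφne
            intro a ha c hc
            have hcz : Metric.infDist a Z ≤ r' + 2 := by
              have := hs1 a ha; linarith
            obtain ⟨b, hb, hab⟩ := (Metric.infDist_lt_iff hZne).mp
              (lt_of_le_of_lt hcz (lt_add_one _))
            have h2 : rT + r' + 4 < dist c b := lt_of_lt_of_le hd (setDist_le_dist hc hb)
            have h4 : dist c b ≤ dist c a + dist a b := dist_triangle c a b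
            have h5 : dist c a = dist a c := dist_comm c a
            linarith
          linarith
      calc ρ ψ * (S * T * ρ φ) = (ρ ψ * S) * (T * ρ φ) := by noncomm_ring
        _ = (ρ ψ * S * ρ χ) * (T * ρ φ) := by rw [← hloc]
        _ = (ρ ψ * S * (ρ χ₁ + ρ χ₂)) * (T * ρ φ) := by rw [hρχ]
        _ = (ρ ψ * S) * (ρ χ₁ * T * ρ φ) + (ρ ψ * (S * ρ χ₂)) * (T * ρ φ) := by
            noncomm_ring
        _ = 0 := by rw [hχ₁T, hSχ₂]; simp

end Core

/-- `C*(Z ⊆ X)` is a closed two-sided ideal in `D*(X)`: it is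
norm-closed, and for `T ∈ D*(X)` and `S ∈ C*(Z ⊆ X)` both `T * S` and `S * T`
lie in `C*(Z ⊆ X)`. -/
theorem statement12 {X : Type*} [MetricSpace X] [ProperSpace X]
    {H : Type*} [NormedAddCommGroup H] [InnerProductSpace ℂ H] [CompleteSpace H]
    (Z : Set X) (ρ : C₀(X, ℂ) →⋆ₙₐ[ℂ] (H →L[ℂ] H))
    (hρ : Dense (↑(Submodule.span ℂ
      {v : H | ∃ (φ : C₀(X, ℂ)) (w : H), ρ φ w = v}) : Set H)) :
    IsClosed (roeIdeal ρ Z) ∧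
      ∀ T ∈ structureAlgebra ρ, ∀ S ∈ roeIdeal ρ Z,
        T * S ∈ roeIdeal ρ Z ∧ S * T ∈ roeIdeal ρ Z := by
  constructor
  · exact isClosed_closure
  · intro T hT S hS
    have hkey : ∀ (A B C : Set (H →L[ℂ] H)), (∀ a ∈ A, ∀ b ∈ B, a * b ∈ C) →
        ∀ x ∈ closure A, ∀ y ∈ closure B, x * y ∈ closure C := by
      intro A B C hAB x hx y hy
      have h1 : (x, y) ∈ closure (A ×ˢ B) := by
        rw [closure_prod_eq]; exact ⟨hx, hy⟩
      have h2 := image_closure_subset_closure_image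
        (f := fun p : (H →L[ℂ] H) × (H →L[ℂ] H) => p.1 * p.2)
        (continuous_fst.mul continuous_snd) (Set.mem_image_of_mem _ h1)
      have h3 : (fun p : (H →L[ℂ] H) × (H →L[ℂ] H) => p.1 * p.2) '' (A ×ˢ B) ⊆ C := by
        rintro z ⟨⟨a, b⟩, hab, rfl⟩
        exact hAB a hab.1 b hab.2
      exact closure_mono h3 h2
    unfold structureAlgebra at hT
    unfold roeIdeal at hS ⊢
    constructor
    · refine hkey _ _ _ ?_ T hT S hS
      rintro a ⟨ha1, ha2⟩ b ⟨hb1, hb2, hb3⟩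
      exact core_TS ρ Z hρ ha1 ha2 hb1 hb2 hb3
    · refine hkey _ _ _ ?_ S hS T hT
      rintro b ⟨hb1, hb2, hb3⟩ a ⟨ha1, ha2⟩
      exact core_ST ρ Z hρ ha1 ha2 hb1 hb2 hb3
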